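/- arXiv:1703.00097 — 5 statements merged into one kernel-verified Lean document; each statement's English description precedes it below -/
import Mathlib

section
/- Let Kn > 0 and let σ_s : (0,1) → ℝ be positive. Suppose f, g : (0,1) × [-1,1] → ℝ are continuous, continuously differentiable in x with jointly continuous x-derivatives, and satisfy the one-dimensional critical (σ_a ≡ 0) stationary radiative transfer equations pointwise: v·∂ₓf(x,v) = (σ_s(x)/Kn)·(⟨f⟩(x) − f(x,v)) and −v·∂ₓg(x,v) = (σ_s(x)/Kn)·(⟨g⟩(x) − g(x,v)) for all (x,v) ∈ (0,1) × [-1,1]. Then the function γ(x) := (1/Kn)·(⟨f⟩(x)·⟨g⟩(x) − ⟨f g⟩(x)) has derivative zero at every x ∈ (0,1); i.e. γ is constant in x. -/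
open MeasureTheory Set Metric
open scoped Interval

lemma contv_aux {h : ℝ → ℝ → ℝ} {x : ℝ} (hx : x ∈ Ioo (0:ℝ) 1)
    (hh : ContinuousOn (fun p : ℝ × ℝ => h p.1 p.2) (Ioo 0 1 ×ˢ Icc (-1) 1)) :
    ContinuousOn (h x) (Icc (-1:ℝ) 1) :=
  hh.comp (continuous_const.prodMk continuous_id).continuousOn
    (fun v hv => ⟨hx, hv⟩)

lemma hasDerivAt_vavg {h hx : ℝ → ℝ → ℝ}
    (hh : ContinuousOn (fun p : ℝ × ℝ => h p.1 p.2) (Ioo 0 1 ×ˢ Icc (-1) 1))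
    (hhx : ContinuousOn (fun p : ℝ × ℝ => hx p.1 p.2) (Ioo 0 1 ×ˢ Icc (-1) 1))
    (hd : ∀ x ∈ Ioo (0:ℝ) 1, ∀ v ∈ Icc (-1:ℝ) 1, HasDerivAt (fun y => h y v) (hx x v) x)
    {x : ℝ} (hxm : x ∈ Ioo (0:ℝ) 1) :
    HasDerivAt (fun y => (1/2 : ℝ) * ∫ v in (-1:ℝ)..1, h y v)
      ((1/2 : ℝ) * ∫ v in (-1:ℝ)..1, hx x v) x := by
  obtain ⟨hx0, hx1⟩ := hxm
  set ε : ℝ := min x (1 - x) / 2 with hε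
  have hmin : 0 < min x (1 - x) := lt_min hx0 (by linarith)
  have hε_pos : 0 < ε := by rw [hε]; linarith
  have hball : ∀ y ∈ Icc (x - ε) (x + ε), y ∈ Ioo (0:ℝ) 1 := by
    intro y hy
    rcases hy with ⟨h1, h2⟩
    have e1 : ε ≤ x / 2 := by
      rw [hε]; have := min_le_left x (1 - x); linarith
    have e2 : ε ≤ (1 - x) / 2 := by
      rw [hε]; have := min_le_right x (1 - x); linarith
    constructor <;> linarith
  have hKcomp : IsCompact (Icc (x - ε) (x + ε) ×ˢ Icc (-1:ℝ) 1) :=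
    isCompact_Icc.prod isCompact_Icc
  obtain ⟨C, hC⟩ := hKcomp.exists_bound_of_continuousOn
    (hhx.mono (fun p hp => ⟨hball p.1 hp.1, hp.2⟩))
  have hIsub : Ι (-1:ℝ) 1 ⊆ Icc (-1:ℝ) 1 := by
    rw [uIoc_of_le (by norm_num : (-1:ℝ) ≤ 1)]
    exact Ioc_subset_Icc_self
  have hballsub : ∀ y ∈ ball x ε, y ∈ Icc (x - ε) (x + ε) := fun y hy => by
    rw [mem_ball, Real.dist_eq] at hy
    have := abs_lt.1 hy
    constructor <;> linarith [this.1, this.2]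
  have hmeas : ∀ᶠ y in nhds x, AEStronglyMeasurable (h y) (volume.restrict (Ι (-1:ℝ) 1)) := by
    filter_upwards [Ioo_mem_nhds hx0 hx1] with y hy
    exact ((contv_aux hy hh).mono hIsub).aestronglyMeasurable measurableSet_uIoc
  have hxm' : x ∈ Ioo (0:ℝ) 1 := ⟨hx0, hx1⟩
  have huIcc : uIcc (-1:ℝ) 1 = Icc (-1:ℝ) 1 := uIcc_of_le (by norm_num)
  have hint : IntervalIntegrable (h x) volume (-1) 1 :=
    ((contv_aux hxm' hh).mono huIcc.le).intervalIntegrable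
  have hxmeas : AEStronglyMeasurable (hx x) (volume.restrict (Ι (-1:ℝ) 1)) :=
    ((contv_aux hxm' hhx).mono hIsub).aestronglyMeasurable measurableSet_uIoc
  have hbound : ∀ᵐ v ∂volume, v ∈ Ι (-1:ℝ) 1 → ∀ y ∈ ball x ε, ‖hx y v‖ ≤ C :=
    Filter.Eventually.of_forall fun v hv y hy => hC (y, v) ⟨hballsub y hy, hIsub hv⟩
  have hbint : IntervalIntegrable (fun _ : ℝ => C) volume (-1) 1 :=
    intervalIntegrable_const
  have hdiff : ∀ᵐ v ∂volume, v ∈ Ι (-1:ℝ) 1 → ∀ y ∈ ball x ε,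
      HasDerivAt (fun z => h z v) (hx y v) y :=
    Filter.Eventually.of_forall fun v hv y hy =>
      hd y (hball y (hballsub y hy)) v (hIsub hv)
  have key := (intervalIntegral.hasDerivAt_integral_of_dominated_loc_of_deriv_le
    (ball_mem_nhds x hε_pos) hmeas hint hxmeas hbound hbint hdiff).2
  exact key.const_mul (1/2 : ℝ)


/-- Velocity average `⟨h⟩(x) = (1/2)∫_{-1}^{1} h(x,v) dv`. -/
noncomputable def vavg (h : ℝ → ℝ → ℝ) (x : ℝ) : ℝ := (1 / 2) * ∫ v in (-1 : ℝ)..1, h x v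

/-- **Proposition 4.1 (1D critical case).**  If `f, g` solve the 1D critical (σₐ ≡ 0)
stationary RTE and its adjoint, then
`γ(x) = (1/Kn)·(⟨f⟩(x)·⟨g⟩(x) − ⟨f g⟩(x))` has zero derivative on `(0,1)`. -/
theorem gamma_const_in_x_critical_1D
    (Kn : ℝ) (hKn : 0 < Kn) (σs : ℝ → ℝ)
    (hσs : ∀ x ∈ Ioo (0 : ℝ) 1, 0 < σs x)
    (f g fx gx : ℝ → ℝ → ℝ)
    (hf_cont : ContinuousOn (fun p : ℝ × ℝ => f p.1 p.2) (Ioo 0 1 ×ˢ Icc (-1) 1))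
    (hg_cont : ContinuousOn (fun p : ℝ × ℝ => g p.1 p.2) (Ioo 0 1 ×ˢ Icc (-1) 1))
    (hfx_cont : ContinuousOn (fun p : ℝ × ℝ => fx p.1 p.2) (Ioo 0 1 ×ˢ Icc (-1) 1))
    (hgx_cont : ContinuousOn (fun p : ℝ × ℝ => gx p.1 p.2) (Ioo 0 1 ×ˢ Icc (-1) 1))
    (hf_deriv : ∀ x ∈ Ioo (0 : ℝ) 1, ∀ v ∈ Icc (-1 : ℝ) 1,
      HasDerivAt (fun y => f y v) (fx x v) x)
    (hg_deriv : ∀ x ∈ Ioo (0 : ℝ) 1, ∀ v ∈ Icc (-1 : ℝ) 1,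
      HasDerivAt (fun y => g y v) (gx x v) x)
    (hfeq : ∀ x ∈ Ioo (0 : ℝ) 1, ∀ v ∈ Icc (-1 : ℝ) 1,
      v * fx x v = (σs x / Kn) * (vavg f x - f x v))
    (hgeq : ∀ x ∈ Ioo (0 : ℝ) 1, ∀ v ∈ Icc (-1 : ℝ) 1,
      -(v * gx x v) = (σs x / Kn) * (vavg g x - g x v)) :
    ∀ x ∈ Ioo (0 : ℝ) 1,
      HasDerivAt
        (fun y => (1 / Kn) * (vavg f y * vavg g y - vavg (fun y v => f y v * g y v) y))
        0 x := by
  intro x hxm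
  have huIcc : uIcc (-1:ℝ) 1 = Icc (-1:ℝ) 1 := uIcc_of_le (by norm_num)
  -- continuity of product and its derivative
  have hfg_cont : ContinuousOn (fun p : ℝ × ℝ => f p.1 p.2 * g p.1 p.2)
      (Ioo 0 1 ×ˢ Icc (-1) 1) := hf_cont.mul hg_cont
  have hfgx_cont : ContinuousOn (fun p : ℝ × ℝ => fx p.1 p.2 * g p.1 p.2 + f p.1 p.2 * gx p.1 p.2)
      (Ioo 0 1 ×ˢ Icc (-1) 1) := (hfx_cont.mul hg_cont).add (hf_cont.mul hgx_cont)
  have hfg_deriv : ∀ y ∈ Ioo (0:ℝ) 1, ∀ v ∈ Icc (-1:ℝ) 1,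
      HasDerivAt (fun z => f z v * g z v) (fx y v * g y v + f y v * gx y v) y := by
    intro y hy v hv
    have := (hf_deriv y hy v hv).mul (hg_deriv y hy v hv)
    exact this
  -- derivatives of the three averages
  have hF : HasDerivAt (vavg f) ((1/2 : ℝ) * ∫ v in (-1:ℝ)..1, fx x v) x :=
    hasDerivAt_vavg hf_cont hfx_cont hf_deriv hxm
  have hG : HasDerivAt (vavg g) ((1/2 : ℝ) * ∫ v in (-1:ℝ)..1, gx x v) x :=
    hasDerivAt_vavg hg_cont hgx_cont hg_deriv hxm
  have hFG : HasDerivAt (vavg (fun y v => f y v * g y v))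
      ((1/2 : ℝ) * ∫ v in (-1:ℝ)..1, (fx x v * g x v + f x v * gx x v)) x :=
    hasDerivAt_vavg hfg_cont hfgx_cont hfg_deriv hxm
  -- integrability of the relevant integrands
  have hint_gx : IntervalIntegrable (gx x) volume (-1) 1 :=
    ((contv_aux hxm hgx_cont).mono huIcc.le).intervalIntegrable
  have hint_fx : IntervalIntegrable (fx x) volume (-1) 1 :=
    ((contv_aux hxm hfx_cont).mono huIcc.le).intervalIntegrable
  have hint_fgx : IntervalIntegrable (fun v => f x v * gx x v) volume (-1) 1 :=
    (((contv_aux hxm hf_cont).mul (contv_aux hxm hgx_cont)).mono huIcc.le).intervalIntegrable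
  have hint_fxg : IntervalIntegrable (fun v => fx x v * g x v) volume (-1) 1 :=
    (((contv_aux hxm hfx_cont).mul (contv_aux hxm hg_cont)).mono huIcc.le).intervalIntegrable
  set Ff := vavg f x with hFf
  set Fg := vavg g x with hFg
  set I1 := ∫ v in (-1:ℝ)..1, gx x v with hI1
  set I2 := ∫ v in (-1:ℝ)..1, f x v * gx x v with hI2
  set I3 := ∫ v in (-1:ℝ)..1, fx x v with hI3
  set I4 := ∫ v in (-1:ℝ)..1, fx x v * g x v with hI4
  -- pointwise identity
  have hpt : ∀ v ∈ Icc (-1:ℝ) 1,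
      (Ff - f x v) * gx x v + fx x v * (Fg - g x v) = 0 := by
    intro v hv
    have h1 := hfeq x hxm v hv
    have h2 := hgeq x hxm v hv
    have hs : σs x / Kn ≠ 0 := ne_of_gt (div_pos (hσs x hxm) hKn)
    have hz : (σs x / Kn) * ((Ff - f x v) * gx x v + fx x v * (Fg - g x v)) = 0 := by
      linear_combination -(gx x v * h1) - fx x v * h2
    exact (mul_eq_zero.1 hz).resolve_left hs
  -- integral identity
  have hkey : Ff * I1 - I2 + (I3 * Fg - I4) = 0 := by
    have hzero : (∫ v in (-1:ℝ)..1,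
        ((Ff - f x v) * gx x v + fx x v * (Fg - g x v))) = 0 := by
      rw [intervalIntegral.integral_congr (g := fun _ => (0:ℝ))
        (fun v hv => hpt v (huIcc ▸ hv))]
      simp
    have hexp : (∫ v in (-1:ℝ)..1,
        ((Ff - f x v) * gx x v + fx x v * (Fg - g x v)))
        = Ff * I1 - I2 + (I3 * Fg - I4) := by
      have e1 : IntervalIntegrable (fun v => (Ff - f x v) * gx x v) volume (-1) 1 := by
        have := (hint_gx.const_mul Ff).sub hint_fgx
        simpa [sub_mul] using this
      have e2 : IntervalIntegrable (fun v => fx x v * (Fg - g x v)) volume (-1) 1 := by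
        have := (hint_fx.mul_const Fg).sub hint_fxg
        simpa [mul_sub] using this
      rw [intervalIntegral.integral_add e1 e2]
      congr 1
      · simp only [sub_mul]
        rw [intervalIntegral.integral_sub (hint_gx.const_mul Ff) hint_fgx,
          intervalIntegral.integral_const_mul]
      · simp only [mul_sub]
        rw [intervalIntegral.integral_sub (hint_fx.mul_const Fg) hint_fxg,
          intervalIntegral.integral_mul_const]
    rw [← hexp]; exact hzero
  -- assemble
  have hD : HasDerivAt
      (fun y => (1 / Kn) * (vavg f y * vavg g y - vavg (fun y v => f y v * g y v) y))
      ((1/Kn) * (((1/2) * I3) * Fg + Ff * ((1/2) * I1) - (1/2) * ∫ v in (-1:ℝ)..1,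
        (fx x v * g x v + f x v * gx x v))) x := by
    exact ((hF.mul hG).sub hFG).const_mul (1/Kn)
  have hsplit : (∫ v in (-1:ℝ)..1, (fx x v * g x v + f x v * gx x v)) = I4 + I2 :=
    intervalIntegral.integral_add hint_fxg hint_fgx
  have h0 : (1/Kn) * (((1/2) * I3) * Fg + Ff * ((1/2) * I1) - (1/2) * ∫ v in (-1:ℝ)..1,
      (fx x v * g x v + f x v * gx x v)) = 0 := by
    rw [hsplit]
    linear_combination (1 / (2 * Kn)) * hkey
  exact h0 ▸ hD
end

section
/- Let Kn > 0 and let σ_s, σ_a : (0,1) → ℝ be positive. Suppose f, g : (0,1) × [-1,1] → ℝ are continuous, continuously differentiable in x with jointly continuous x-derivatives, and satisfy the subcritical 1D stationary radiative transfer equations pointwise: v·∂ₓf(x,v) = (σ_s(x)/Kn)·(⟨f⟩(x) − f(x,v)) − Kn·σ_a(x)·f(x,v) and −v·∂ₓg(x,v) = (σ_s(x)/Kn)·(⟨g⟩(x) − g(x,v)) − Kn·σ_a(x)·g(x,v). Then for every x ∈ (0,1): (d/dx)⟨f g⟩(x) = [(σ_s(x)/σ_a(x)) / (Kn² + σ_s(x)/σ_a(x))]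 · (d/dx)(⟨f⟩·⟨g⟩)(x), and consequently, for γ(x) := (1/Kn)·(⟨f⟩(x)·⟨g⟩(x) − ⟨f g⟩(x)), one has (d/dx)γ(x) = [Kn / (Kn² + σ_s(x)/σ_a(x))] · (d/dx)(⟨f⟩·⟨g⟩)(x). -/
open MeasureTheory Set

open Metric Interval in
/-- Differentiation under the velocity average. -/
lemma vavg_hasDerivAt (h hx : ℝ → ℝ → ℝ)
    (hc : ContinuousOn (fun p : ℝ × ℝ => h p.1 p.2) (Ioo 0 1 ×ˢ Icc (-1) 1))
    (hxc : ContinuousOn (fun p : ℝ × ℝ => hx p.1 p.2) (Ioo 0 1 ×ˢ Icc (-1) 1))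
    (hd : ∀ x ∈ Ioo (0:ℝ) 1, ∀ v ∈ Icc (-1:ℝ) 1, HasDerivAt (fun y => h y v) (hx x v) x)
    (x : ℝ) (hx0 : x ∈ Ioo (0:ℝ) 1) :
    HasDerivAt (vavg h) ((1/2) * ∫ v in (-1:ℝ)..1, hx x v) x := by
  obtain ⟨ε, hε, hball⟩ : ∃ ε > 0, closedBall x ε ⊆ Ioo (0:ℝ) 1 := by
    rcases Metric.isOpen_iff.1 isOpen_Ioo x hx0 with ⟨δ, hδ, hsub⟩
    exact ⟨δ/2, by positivity, fun y hy => hsub (lt_of_le_of_lt (mem_closedBall.1 hy) (by linarith))⟩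
  have hsubI : closedBall x ε ⊆ Ioo (0:ℝ) 1 := hball
  -- bound for hx on closedBall × Icc
  have hK : IsCompact (closedBall x ε ×ˢ Icc (-1:ℝ) 1) :=
    (isCompact_closedBall x ε).prod isCompact_Icc
  obtain ⟨C, hC⟩ : ∃ C, ∀ p ∈ closedBall x ε ×ˢ Icc (-1:ℝ) 1,
      ‖hx p.1 p.2‖ ≤ C := by
    rcases hK.exists_bound_of_continuousOn (hxc.mono (fun p hp => ⟨hsubI hp.1, hp.2⟩)) with ⟨C, hC⟩
    exact ⟨C, hC⟩
  have hIoc : Ι (-1:ℝ) 1 = Ioc (-1:ℝ) 1 := by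
    rw [uIoc_of_le (by norm_num : (-1:ℝ) ≤ 1)]
  have hIsub : Ι (-1:ℝ) 1 ⊆ Icc (-1:ℝ) 1 := by rw [hIoc]; exact Ioc_subset_Icc_self
  have meas : ∀ y ∈ Ioo (0:ℝ) 1, AEStronglyMeasurable (fun v => h y v)
      ((volume : Measure ℝ).restrict (Ι (-1) 1)) := by
    intro y hy
    have : ContinuousOn (fun v => h y v) (Icc (-1:ℝ) 1) :=
      hc.comp (continuous_const.prodMk continuous_id).continuousOn (fun v hv => ⟨hy, hv⟩)
    exact ((this.mono hIsub).aestronglyMeasurable (hIoc ▸ measurableSet_Ioc))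
  have measx : ∀ y ∈ Ioo (0:ℝ) 1, AEStronglyMeasurable (fun v => hx y v)
      ((volume : Measure ℝ).restrict (Ι (-1) 1)) := by
    intro y hy
    have : ContinuousOn (fun v => hx y v) (Icc (-1:ℝ) 1) :=
      hxc.comp (continuous_const.prodMk continuous_id).continuousOn (fun v hv => ⟨hy, hv⟩)
    exact ((this.mono hIsub).aestronglyMeasurable (hIoc ▸ measurableSet_Ioc))
  have key := intervalIntegral.hasDerivAt_integral_of_dominated_loc_of_deriv_le
    (F := fun y v => h y v) (F' := fun y v => hx y v) (x₀ := x)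
    (a := (-1:ℝ)) (b := 1) (bound := fun _ => C) (μ := volume) (ball_mem_nhds x hε)
    (Filter.eventually_of_mem (isOpen_Ioo.mem_nhds hx0) (fun y hy => meas y hy))
    (by
      have : ContinuousOn (fun v => h x v) (Icc (-1:ℝ) 1) :=
        hc.comp (continuous_const.prodMk continuous_id).continuousOn (fun v hv => ⟨hx0, hv⟩)
      exact (this.mono (by rw [uIcc_of_le (by norm_num : (-1:ℝ) ≤ 1)])).intervalIntegrable)
    (measx x hx0)
    (Filter.Eventually.of_forall (fun v hv y hy =>
      hC (y, v) ⟨ball_subset_closedBall hy, hIsub hv⟩))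
    (intervalIntegrable_const)
    (Filter.Eventually.of_forall (fun v hv y hy =>
      hd y (hsubI (ball_subset_closedBall hy)) v (hIsub hv)))
  exact key.2.const_mul (1/2)

/-- **Proposition 4.3 (subcritical case identity).**  If `f, g` solve the subcritical 1D
stationary RTE and its adjoint, then at every `x ∈ (0,1)`,
`(d/dx)⟨f g⟩ = [(σ_s/σ_a)/(Kn² + σ_s/σ_a)]·(d/dx)(⟨f⟩⟨g⟩)` and, for
`γ = (1/Kn)(⟨f⟩⟨g⟩ − ⟨f g⟩)`,
`(d/dx)γ = [Kn/(Kn² + σ_s/σ_a)]·(d/dx)(⟨f⟩⟨g⟩)`. -/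
theorem gamma_deriv_identity_subcritical_1D
    (Kn : ℝ) (hKn : 0 < Kn) (σs σa : ℝ → ℝ)
    (hσs : ∀ x ∈ Ioo (0 : ℝ) 1, 0 < σs x)
    (hσa : ∀ x ∈ Ioo (0 : ℝ) 1, 0 < σa x)
    (f g fx gx : ℝ → ℝ → ℝ)
    (hf_cont : ContinuousOn (fun p : ℝ × ℝ => f p.1 p.2) (Ioo 0 1 ×ˢ Icc (-1) 1))
    (hg_cont : ContinuousOn (fun p : ℝ × ℝ => g p.1 p.2) (Ioo 0 1 ×ˢ Icc (-1) 1))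
    (hfx_cont : ContinuousOn (fun p : ℝ × ℝ => fx p.1 p.2) (Ioo 0 1 ×ˢ Icc (-1) 1))
    (hgx_cont : ContinuousOn (fun p : ℝ × ℝ => gx p.1 p.2) (Ioo 0 1 ×ˢ Icc (-1) 1))
    (hf_deriv : ∀ x ∈ Ioo (0 : ℝ) 1, ∀ v ∈ Icc (-1 : ℝ) 1,
      HasDerivAt (fun y => f y v) (fx x v) x)
    (hg_deriv : ∀ x ∈ Ioo (0 : ℝ) 1, ∀ v ∈ Icc (-1 : ℝ) 1,
      HasDerivAt (fun y => g y v) (gx x v) x)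
    (hfeq : ∀ x ∈ Ioo (0 : ℝ) 1, ∀ v ∈ Icc (-1 : ℝ) 1,
      v * fx x v = (σs x / Kn) * (vavg f x - f x v) - Kn * σa x * f x v)
    (hgeq : ∀ x ∈ Ioo (0 : ℝ) 1, ∀ v ∈ Icc (-1 : ℝ) 1,
      -(v * gx x v) = (σs x / Kn) * (vavg g x - g x v) - Kn * σa x * g x v) :
    ∀ x ∈ Ioo (0 : ℝ) 1, ∃ D : ℝ,
      HasDerivAt (fun y => vavg f y * vavg g y) D x ∧
      HasDerivAt (fun y => vavg (fun y v => f y v * g y v) y)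
        (((σs x / σa x) / (Kn ^ 2 + σs x / σa x)) * D) x ∧
      HasDerivAt
        (fun y => (1 / Kn) * (vavg f y * vavg g y - vavg (fun y v => f y v * g y v) y))
        ((Kn / (Kn ^ 2 + σs x / σa x)) * D) x := by
  intro x hx
  have hσsx := hσs x hx
  have hσax := hσa x hx
  set S : ℝ := σs x / Kn with hS
  set K : ℝ := Kn * σa x with hKdef
  have hSpos : 0 < S := div_pos hσsx hKn
  have hKpos : 0 < K := mul_pos hKn hσax
  have hA : 0 < S + K := by linarith
  set Fx := vavg f x with hFx
  set Gx := vavg g x with hGx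
  -- derivatives of the averages
  have hF : HasDerivAt (vavg f) ((1/2) * ∫ v in (-1:ℝ)..1, fx x v) x :=
    vavg_hasDerivAt f fx hf_cont hfx_cont hf_deriv x hx
  have hG : HasDerivAt (vavg g) ((1/2) * ∫ v in (-1:ℝ)..1, gx x v) x :=
    vavg_hasDerivAt g gx hg_cont hgx_cont hg_deriv x hx
  have hP : HasDerivAt (fun y => vavg (fun y v => f y v * g y v) y)
      ((1/2) * ∫ v in (-1:ℝ)..1, fx x v * g x v + f x v * gx x v) x := by
    have := vavg_hasDerivAt (fun y v => f y v * g y v)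
      (fun x v => fx x v * g x v + f x v * gx x v)
      (hf_cont.mul hg_cont)
      ((hfx_cont.mul hg_cont).add (hf_cont.mul hgx_cont))
      (fun y hy v hv => (hf_deriv y hy v hv).mul (hg_deriv y hy v hv)) x hx
    exact this
  set F' := (1/2) * ∫ v in (-1:ℝ)..1, fx x v with hF'
  set G' := (1/2) * ∫ v in (-1:ℝ)..1, gx x v with hG'
  set D : ℝ := F' * Gx + Fx * G' with hD
  have hFG : HasDerivAt (fun y => vavg f y * vavg g y) D x := hF.mul hG
  -- pointwise identity
  have hpt : ∀ v ∈ Icc (-1:ℝ) 1,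
      fx x v * g x v + f x v * gx x v = (S/(S+K)) * (fx x v * Gx + Fx * gx x v) := by
    intro v hv
    have e1 : (S + K) * f x v = S * Fx - v * fx x v := by
      have := hfeq x hx v hv; rw [← hS, ← hKdef, ← hFx] at this; linarith
    have e2 : (S + K) * g x v = S * Gx + v * gx x v := by
      have := hgeq x hx v hv; rw [← hS, ← hKdef, ← hGx] at this; linarith
    have e3 : (S + K) * (fx x v * g x v + f x v * gx x v)
        = S * (fx x v * Gx + Fx * gx x v) := by
      have : (S + K) * (fx x v * g x v + f x v * gx x v)
          = fx x v * ((S + K) * g x v) + gx x v * ((S + K) * f x v) := by ring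
      rw [this, e1, e2]; ring
    field_simp
    linarith [e3]
  -- integrability facts
  have hIcc : uIcc (-1:ℝ) 1 = Icc (-1:ℝ) 1 := uIcc_of_le (by norm_num)
  have hfxi : IntervalIntegrable (fun v => fx x v) volume (-1) 1 := by
    apply ContinuousOn.intervalIntegrable
    rw [hIcc]
    exact hfx_cont.comp (continuous_const.prodMk continuous_id).continuousOn (fun v hv => ⟨hx, hv⟩)
  have hgxi : IntervalIntegrable (fun v => gx x v) volume (-1) 1 := by
    apply ContinuousOn.intervalIntegrable
    rw [hIcc]
    exact hgx_cont.comp (continuous_const.prodMk continuous_id).continuousOn (fun v hv => ⟨hx, hv⟩)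
  -- integral identity
  have hint : (1/2) * (∫ v in (-1:ℝ)..1, fx x v * g x v + f x v * gx x v)
      = (S/(S+K)) * D := by
    have h1 : (∫ v in (-1:ℝ)..1, fx x v * g x v + f x v * gx x v)
        = ∫ v in (-1:ℝ)..1, (S/(S+K)) * (fx x v * Gx + Fx * gx x v) := by
      apply intervalIntegral.integral_congr
      intro v hv
      exact hpt v (hIcc ▸ hv)
    rw [h1, intervalIntegral.integral_const_mul]
    have h2 : (∫ v in (-1:ℝ)..1, fx x v * Gx + Fx * gx x v)
        = (∫ v in (-1:ℝ)..1, fx x v) * Gx + Fx * ∫ v in (-1:ℝ)..1, gx x v := by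
      rw [intervalIntegral.integral_add (hfxi.mul_const _) (hgxi.const_mul _),
        intervalIntegral.integral_mul_const, intervalIntegral.integral_const_mul]
    rw [h2, hD, hF', hG']; ring
  have hc : (σs x / σa x) / (Kn ^ 2 + σs x / σa x) = S/(S+K) := by
    rw [hS, hKdef]
    rw [div_eq_div_iff (by positivity) (by positivity)]
    field_simp
    ring
  refine ⟨D, hFG, ?_, ?_⟩
  · rw [hc, ← hint]; exact hP
  · have h3 : HasDerivAt
        (fun y => (1 / Kn) * (vavg f y * vavg g y - vavg (fun y v => f y v * g y v) y))
        ((1/Kn) * (D - (S/(S+K)) * D)) x := by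
      refine HasDerivAt.const_mul _ (hFG.sub ?_)
      rw [← hint]; exact hP
    have h4 : (1/Kn) * (D - (S/(S+K)) * D) = (Kn / (Kn ^ 2 + σs x / σa x)) * D := by
      rw [hS, hKdef]
      have h5 : Kn ^ 2 + σs x / σa x ≠ 0 := by positivity
      have h6 : σs x / Kn + Kn * σa x ≠ 0 := by positivity
      field_simp
      ring
    rw [← h4]; exact h3
end

section
/- Let Kn > 0 and σ_{a0}, σ̃_a : (0,1) → ℝ be continuous. Suppose f₀, f̃, g : (0,1) × [-1,1] → ℝ are continuous, continuously differentiable in x with jointly continuous x-derivatives, and satisfy pointwise: v·∂ₓf̃(x,v) = (1/Kn)·(⟨f̃⟩(x) − f̃(x,v)) − Kn·σ_{a0}(x)·f̃(x,v) − Kn·σ̃_a(x)·f₀(x,v) and −v·∂ₓg(x,v) = (1/Kn)·(⟨g⟩(x) − g(x,v)) − Kn·σ_{a0}(x)·g(x,v). Then for every x ∈ (0,1): (d/dx) ∫_{-1}^{1} v·f̃(x,v)·g(x,v) dv = −Kn·σ̃_a(x) · ∫_{-1}^{1} f₀(x,v)·g(x,v) dv. -/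
open MeasureTheory Set

/-- **1D differential form of the duality relation (3.6) for the absorption coefficient.**
If `f̃` solves the linearized RTE with source `−Kn σ̃ₐ f₀` and `g` solves the adjoint
equation, then `(d/dx)∫_{-1}^1 v f̃ g dv = −Kn σ̃ₐ(x) ∫_{-1}^1 f₀ g dv` on `(0,1)`. -/
theorem greens_identity_absorption_1D
    (Kn : ℝ) (hKn : 0 < Kn) (σa0 σat : ℝ → ℝ)
    (hσa0 : ContinuousOn σa0 (Ioo 0 1)) (hσat : ContinuousOn σat (Ioo 0 1))
    (f0 ft g ftx gx : ℝ → ℝ → ℝ)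
    (hf0_cont : ContinuousOn (fun p : ℝ × ℝ => f0 p.1 p.2) (Ioo 0 1 ×ˢ Icc (-1) 1))
    (hft_cont : ContinuousOn (fun p : ℝ × ℝ => ft p.1 p.2) (Ioo 0 1 ×ˢ Icc (-1) 1))
    (hg_cont : ContinuousOn (fun p : ℝ × ℝ => g p.1 p.2) (Ioo 0 1 ×ˢ Icc (-1) 1))
    (hftx_cont : ContinuousOn (fun p : ℝ × ℝ => ftx p.1 p.2) (Ioo 0 1 ×ˢ Icc (-1) 1))
    (hgx_cont : ContinuousOn (fun p : ℝ × ℝ => gx p.1 p.2) (Ioo 0 1 ×ˢ Icc (-1) 1))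
    (hft_deriv : ∀ x ∈ Ioo (0 : ℝ) 1, ∀ v ∈ Icc (-1 : ℝ) 1,
      HasDerivAt (fun y => ft y v) (ftx x v) x)
    (hg_deriv : ∀ x ∈ Ioo (0 : ℝ) 1, ∀ v ∈ Icc (-1 : ℝ) 1,
      HasDerivAt (fun y => g y v) (gx x v) x)
    (hfteq : ∀ x ∈ Ioo (0 : ℝ) 1, ∀ v ∈ Icc (-1 : ℝ) 1,
      v * ftx x v = (1 / Kn) * (vavg ft x - ft x v)
        - Kn * σa0 x * ft x v - Kn * σat x * f0 x v)
    (hgeq : ∀ x ∈ Ioo (0 : ℝ) 1, ∀ v ∈ Icc (-1 : ℝ) 1,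
      -(v * gx x v) = (1 / Kn) * (vavg g x - g x v) - Kn * σa0 x * g x v) :
    ∀ x ∈ Ioo (0 : ℝ) 1,
      HasDerivAt (fun y => ∫ v in (-1 : ℝ)..1, v * ft y v * g y v)
        (-(Kn * σat x) * ∫ v in (-1 : ℝ)..1, f0 x v * g x v) x := by
  intro x hx
  obtain ⟨hx0, hx1⟩ := hx
  set ε : ℝ := min x (1 - x) / 2 with hεdef
  have hεx : ε ≤ x / 2 := by
    have : min x (1 - x) ≤ x := min_le_left _ _
    simp only [hεdef]; linarith
  have hεx1 : ε ≤ (1 - x) / 2 := by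
    have : min x (1 - x) ≤ 1 - x := min_le_right _ _
    simp only [hεdef]; linarith
  have hε_pos : 0 < ε := by
    have : 0 < min x (1 - x) := lt_min hx0 (by linarith)
    simp only [hεdef]; linarith
  have hIccsub : Icc (x - ε) (x + ε) ⊆ Ioo (0 : ℝ) 1 := by
    intro y hy
    constructor <;> [skip; skip] <;> rcases hy with ⟨h1, h2⟩ <;> linarith
  have hballIcc : Metric.ball x ε ⊆ Icc (x - ε) (x + ε) := by
    rw [Real.ball_eq_Ioo]; exact Ioo_subset_Icc_self
  have hballsub : Metric.ball x ε ⊆ Ioo (0 : ℝ) 1 := hballIcc.trans hIccsub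
  have hxmem : x ∈ Ioo (0 : ℝ) 1 := ⟨hx0, hx1⟩
  have hΙ : Set.uIoc (-1 : ℝ) 1 = Ioc (-1 : ℝ) 1 := Set.uIoc_of_le (by norm_num)
  have huIcc : Set.uIcc (-1 : ℝ) 1 = Icc (-1 : ℝ) 1 := Set.uIcc_of_le (by norm_num)
  -- continuity of slices
  have hslice : ∀ (h : ℝ → ℝ → ℝ),
      ContinuousOn (fun p : ℝ × ℝ => h p.1 p.2) (Ioo 0 1 ×ˢ Icc (-1) 1) →
      ∀ y ∈ Ioo (0 : ℝ) 1, ContinuousOn (fun v => h y v) (Icc (-1 : ℝ) 1) := by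
    intro h hc y hy
    exact hc.comp ((Continuous.prodMk_right y).continuousOn) (fun v hv => ⟨hy, hv⟩)
  have hmeas : ∀ (h : ℝ → ℝ → ℝ),
      ContinuousOn (fun p : ℝ × ℝ => h p.1 p.2) (Ioo 0 1 ×ˢ Icc (-1) 1) →
      ∀ y ∈ Ioo (0 : ℝ) 1,
        AEStronglyMeasurable (fun v => h y v) (volume.restrict (Set.uIoc (-1 : ℝ) 1)) := by
    intro h hc y hy
    rw [hΙ]
    exact ((hslice h hc y hy).mono Ioc_subset_Icc_self).aestronglyMeasurable measurableSet_Ioc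
  have hII : ∀ (h : ℝ → ℝ → ℝ),
      ContinuousOn (fun p : ℝ × ℝ => h p.1 p.2) (Ioo 0 1 ×ˢ Icc (-1) 1) →
      ∀ y ∈ Ioo (0 : ℝ) 1, IntervalIntegrable (fun v => h y v) volume (-1 : ℝ) 1 := by
    intro h hc y hy
    apply ContinuousOn.intervalIntegrable
    rw [huIcc]; exact hslice h hc y hy
  have hcont_snd : ContinuousOn (fun p : ℝ × ℝ => p.2) (Ioo 0 1 ×ˢ Icc (-1 : ℝ) 1) :=
    continuous_snd.continuousOn
  -- the function and its derivative
  set F : ℝ → ℝ → ℝ := fun y v => v * ft y v * g y v with hF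
  set F' : ℝ → ℝ → ℝ := fun y v => v * ftx y v * g y v + v * ft y v * gx y v with hF'
  have hF_cont : ContinuousOn (fun p : ℝ × ℝ => F p.1 p.2) (Ioo 0 1 ×ˢ Icc (-1) 1) :=
    (hcont_snd.mul hft_cont).mul hg_cont
  have hF'_cont : ContinuousOn (fun p : ℝ × ℝ => F' p.1 p.2) (Ioo 0 1 ×ˢ Icc (-1) 1) :=
    ((hcont_snd.mul hftx_cont).mul hg_cont).add ((hcont_snd.mul hft_cont).mul hgx_cont)
  -- bound on a compact set
  have hKcompact : IsCompact (Icc (x - ε) (x + ε) ×ˢ Icc (-1 : ℝ) 1) :=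
    isCompact_Icc.prod isCompact_Icc
  obtain ⟨C, hC⟩ := hKcompact.exists_bound_of_continuousOn
    (hF'_cont.mono (Set.prod_mono hIccsub subset_rfl))
  -- differentiation under the integral sign
  have main := intervalIntegral.hasDerivAt_integral_of_dominated_loc_of_deriv_le
    (F := F) (F' := F') (x₀ := x) (a := (-1 : ℝ)) (b := 1) (μ := volume)
    (bound := fun _ => C) (Metric.ball_mem_nhds x hε_pos)
    (by
      filter_upwards [IsOpen.mem_nhds isOpen_Ioo hxmem] with y hy
      exact hmeas _ hF_cont y hy)
    (hII _ hF_cont x hxmem)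
    (hmeas _ hF'_cont x hxmem)
    (by
      filter_upwards with t
      intro ht y hy
      have htI : t ∈ Icc (-1 : ℝ) 1 := Ioc_subset_Icc_self (hΙ ▸ ht)
      exact hC (y, t) ⟨hballIcc hy, htI⟩)
    intervalIntegrable_const
    (by
      filter_upwards with t
      intro ht y hy
      have hy' : y ∈ Ioo (0 : ℝ) 1 := hballsub hy
      have htI : t ∈ Icc (-1 : ℝ) 1 := Ioc_subset_Icc_self (hΙ ▸ ht)
      have h1 := (hft_deriv y hy' t htI).const_mul t
      have h2 := hg_deriv y hy' t htI
      show HasDerivAt (fun y => F y t) (F' y t) y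
      simp only [hF, hF']
      exact h1.mul h2)
  -- identify the derivative value
  have hval : (∫ v in (-1 : ℝ)..1, F' x v)
      = -(Kn * σat x) * ∫ v in (-1 : ℝ)..1, f0 x v * g x v := by
    have hcongr : ∀ v ∈ Set.uIcc (-1 : ℝ) 1,
        F' x v = (1 / Kn * vavg ft x) * g x v - (1 / Kn * vavg g x) * ft x v
          - (Kn * σat x) * (f0 x v * g x v) := by
      intro v hv
      rw [huIcc] at hv
      have h1 := hfteq x hxmem v hv
      have h2 := hgeq x hxmem v hv
      have h2' : v * gx x v = -((1 / Kn) * (vavg g x - g x v) - Kn * σa0 x * g x v) := by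
        linarith
      have : F' x v = (v * ftx x v) * g x v + ft x v * (v * gx x v) := by
        simp only [hF']; ring
      rw [this, h1, h2']; ring
    rw [intervalIntegral.integral_congr hcongr]
    have hg_int := hII _ hg_cont x hxmem
    have hft_int := hII _ hft_cont x hxmem
    have hf0g_int := hII (fun a b => f0 a b * g a b) (hf0_cont.mul hg_cont) x hxmem
    rw [intervalIntegral.integral_sub
        (((hg_int.const_mul _).sub (hft_int.const_mul _))) (hf0g_int.const_mul _),
      intervalIntegral.integral_sub (hg_int.const_mul _) (hft_int.const_mul _),
      intervalIntegral.integral_const_mul, intervalIntegral.integral_const_mul,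
      intervalIntegral.integral_const_mul]
    have hg2 : (∫ v in (-1 : ℝ)..1, g x v) = 2 * vavg g x := by
      simp [vavg]
    have hft2 : (∫ v in (-1 : ℝ)..1, ft x v) = 2 * vavg ft x := by
      simp [vavg]
    rw [hg2, hft2]; ring
  have := main.2
  rw [hval] at this
  exact this
end

section
/- Let Kn > 0 and σ_{s0}, σ̃_s, σ_a : (0,1) → ℝ be continuous. Suppose f₀, f̃, g : (0,1) × [-1,1] → ℝ are continuous, continuously differentiable in x with jointly continuous x-derivatives, and satisfy pointwise: v·∂ₓf̃(x,v) = (σ_{s0}(x)/Kn)·(⟨f̃⟩(x) − f̃(x,v)) + (σ̃_s(x)/Kn)·(⟨f₀⟩(x) − f₀(x,v)) − Kn·σ_a(x)·f̃(x,v) and −v·∂ₓg(x,v) = (σ_{s0}(x)/Kn)·(⟨g⟩(x) − g(x,v)) − Kn·σ_a(x)·g(x,v). Then for every x ∈ (0,1): (d/dx) ∫_{-1}^{1} v·f̃(x,v)·g(x,v) dv = (σ̃_s(x)/Kn) · ∫_{-1}^{1} g(x,v)·(⟨f₀⟩(x) − f₀(x,v)) dv. -/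
open MeasureTheory Set

private lemma slice_cont {F : ℝ → ℝ → ℝ}
    (hF : ContinuousOn (fun p : ℝ × ℝ => F p.1 p.2) (Ioo 0 1 ×ˢ Icc (-1) 1))
    {y : ℝ} (hy : y ∈ Ioo (0:ℝ) 1) :
    ContinuousOn (fun v => F y v) (Icc (-1:ℝ) 1) := by
  have hmap : Continuous (fun v : ℝ => (y, v)) := by continuity
  exact hF.comp hmap.continuousOn (fun v hv => ⟨hy, hv⟩)

/-- **1D differential form of the duality relation (4.6) for the scattering coefficient.**
If `f̃` solves the linearized RTE with source `(σ̃_s/Kn)·L f₀` and `g` solves the adjoint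
equation, then
`(d/dx)∫_{-1}^1 v f̃ g dv = (σ̃_s(x)/Kn)·∫_{-1}^1 g·(⟨f₀⟩ − f₀) dv` on `(0,1)`. -/
theorem greens_identity_scattering_1D
    (Kn : ℝ) (hKn : 0 < Kn) (σs0 σst σa : ℝ → ℝ)
    (hσs0 : ContinuousOn σs0 (Ioo 0 1)) (hσst : ContinuousOn σst (Ioo 0 1))
    (hσa : ContinuousOn σa (Ioo 0 1))
    (f0 ft g ftx gx : ℝ → ℝ → ℝ)
    (hf0_cont : ContinuousOn (fun p : ℝ × ℝ => f0 p.1 p.2) (Ioo 0 1 ×ˢ Icc (-1) 1))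
    (hft_cont : ContinuousOn (fun p : ℝ × ℝ => ft p.1 p.2) (Ioo 0 1 ×ˢ Icc (-1) 1))
    (hg_cont : ContinuousOn (fun p : ℝ × ℝ => g p.1 p.2) (Ioo 0 1 ×ˢ Icc (-1) 1))
    (hftx_cont : ContinuousOn (fun p : ℝ × ℝ => ftx p.1 p.2) (Ioo 0 1 ×ˢ Icc (-1) 1))
    (hgx_cont : ContinuousOn (fun p : ℝ × ℝ => gx p.1 p.2) (Ioo 0 1 ×ˢ Icc (-1) 1))
    (hft_deriv : ∀ x ∈ Ioo (0 : ℝ) 1, ∀ v ∈ Icc (-1 : ℝ) 1,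
      HasDerivAt (fun y => ft y v) (ftx x v) x)
    (hg_deriv : ∀ x ∈ Ioo (0 : ℝ) 1, ∀ v ∈ Icc (-1 : ℝ) 1,
      HasDerivAt (fun y => g y v) (gx x v) x)
    (hfteq : ∀ x ∈ Ioo (0 : ℝ) 1, ∀ v ∈ Icc (-1 : ℝ) 1,
      v * ftx x v = (σs0 x / Kn) * (vavg ft x - ft x v)
        + (σst x / Kn) * (vavg f0 x - f0 x v) - Kn * σa x * ft x v)
    (hgeq : ∀ x ∈ Ioo (0 : ℝ) 1, ∀ v ∈ Icc (-1 : ℝ) 1,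
      -(v * gx x v) = (σs0 x / Kn) * (vavg g x - g x v) - Kn * σa x * g x v) :
    ∀ x ∈ Ioo (0 : ℝ) 1,
      HasDerivAt (fun y => ∫ v in (-1 : ℝ)..1, v * ft y v * g y v)
        ((σst x / Kn) * ∫ v in (-1 : ℝ)..1, g x v * (vavg f0 x - f0 x v)) x := by
  intro x hx
  obtain ⟨hx0, hx1⟩ := hx
  -- choose ε with closed ε-neighborhood inside (0,1)
  set ε : ℝ := min x (1 - x) / 2 with hε_def
  have hε_pos : 0 < ε := by
    have : 0 < min x (1 - x) := lt_min hx0 (by linarith)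
    positivity
  have hball : Metric.closedBall x ε ⊆ Ioo (0:ℝ) 1 := by
    intro y hy
    rw [Metric.mem_closedBall, Real.dist_eq, abs_le] at hy
    have h1 : ε ≤ x / 2 := by rw [hε_def]; have := min_le_left x (1 - x); linarith
    have h2 : ε ≤ (1 - x) / 2 := by rw [hε_def]; have := min_le_right x (1 - x); linarith
    exact ⟨by linarith [hy.1], by linarith [hy.2]⟩
  have hxmem : x ∈ Ioo (0:ℝ) 1 := ⟨hx0, hx1⟩
  have hmemI : ∀ y ∈ Metric.ball x ε, y ∈ Ioo (0:ℝ) 1 := fun y hy =>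
    hball (Metric.ball_subset_closedBall hy)
  have huIoc : uIoc (-1:ℝ) 1 = Ioc (-1:ℝ) 1 := uIoc_of_le (by norm_num)
  have huIcc : uIcc (-1:ℝ) 1 = Icc (-1:ℝ) 1 := uIcc_of_le (by norm_num)
  have hIsub : uIoc (-1:ℝ) 1 ⊆ Icc (-1:ℝ) 1 := by rw [huIoc]; exact Ioc_subset_Icc_self
  have hFcont : ∀ y ∈ Ioo (0:ℝ) 1, ContinuousOn (fun v => v * ft y v * g y v) (Icc (-1:ℝ) 1) :=
    fun y hy => (continuous_id.continuousOn.mul (slice_cont hft_cont hy)).mul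
      (slice_cont hg_cont hy)
  have hF'cont : ∀ y ∈ Ioo (0:ℝ) 1, ContinuousOn
      (fun v => v * (ftx y v * g y v + ft y v * gx y v)) (Icc (-1:ℝ) 1) :=
    fun y hy => continuous_id.continuousOn.mul
      (((slice_cont hftx_cont hy).mul (slice_cont hg_cont hy)).add
        ((slice_cont hft_cont hy).mul (slice_cont hgx_cont hy)))
  -- compact bound for the derivative integrand
  have hK : IsCompact (Metric.closedBall x ε ×ˢ Icc (-1:ℝ) 1) :=
    (isCompact_closedBall x ε).prod isCompact_Icc
  have hΦ : ContinuousOn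
      (fun p : ℝ × ℝ => p.2 * (ftx p.1 p.2 * g p.1 p.2 + ft p.1 p.2 * gx p.1 p.2))
      (Metric.closedBall x ε ×ˢ Icc (-1:ℝ) 1) := by
    apply ContinuousOn.mono _ (Set.prod_mono hball (subset_refl _))
    exact continuous_snd.continuousOn.mul ((hftx_cont.mul hg_cont).add (hft_cont.mul hgx_cont))
  obtain ⟨C, hC⟩ := hK.exists_bound_of_continuousOn hΦ
  -- hypotheses of differentiation under the integral sign
  have hmeas : ∀ᶠ y in nhds x, AEStronglyMeasurable (fun v => v * ft y v * g y v)
      (volume.restrict (uIoc (-1:ℝ) 1)) := by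
    filter_upwards [Metric.ball_mem_nhds x hε_pos] with y hy
    exact ((hFcont y (hmemI y hy)).mono hIsub).aestronglyMeasurable measurableSet_uIoc
  have hint : IntervalIntegrable (fun v => v * ft x v * g x v) volume (-1:ℝ) 1 := by
    apply ContinuousOn.intervalIntegrable; rw [huIcc]; exact hFcont x hxmem
  have hmeas' : AEStronglyMeasurable (fun v => v * (ftx x v * g x v + ft x v * gx x v))
      (volume.restrict (uIoc (-1:ℝ) 1)) :=
    ((hF'cont x hxmem).mono hIsub).aestronglyMeasurable measurableSet_uIoc
  have hbound : ∀ᵐ t ∂(volume : Measure ℝ), t ∈ uIoc (-1:ℝ) 1 → ∀ y ∈ Metric.ball x ε,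
      ‖t * (ftx y t * g y t + ft y t * gx y t)‖ ≤ C := by
    refine Filter.Eventually.of_forall (fun t ht y hy => ?_)
    exact hC (y, t) ⟨Metric.ball_subset_closedBall hy, hIsub ht⟩
  have hdiff : ∀ᵐ t ∂(volume : Measure ℝ), t ∈ uIoc (-1:ℝ) 1 → ∀ y ∈ Metric.ball x ε,
      HasDerivAt (fun z => t * ft z t * g z t) (t * (ftx y t * g y t + ft y t * gx y t)) y := by
    refine Filter.Eventually.of_forall (fun t ht y hy => ?_)
    have h1 := hft_deriv y (hmemI y hy) t (hIsub ht)
    have h2 := hg_deriv y (hmemI y hy) t (hIsub ht)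
    simpa [mul_assoc] using (h1.mul h2).const_mul t
  have key := (intervalIntegral.hasDerivAt_integral_of_dominated_loc_of_deriv_le
    (F := fun y v => v * ft y v * g y v)
    (F' := fun y v => v * (ftx y v * g y v + ft y v * gx y v))
    (bound := fun _ => C) (Metric.ball_mem_nhds x hε_pos) hmeas hint hmeas' hbound
    intervalIntegrable_const hdiff).2
  -- identify the value of the derivative
  have i1 : IntervalIntegrable (fun v => g x v) volume (-1:ℝ) 1 := by
    apply ContinuousOn.intervalIntegrable; rw [huIcc]; exact slice_cont hg_cont hxmem
  have i2 : IntervalIntegrable (fun v => ft x v) volume (-1:ℝ) 1 := by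
    apply ContinuousOn.intervalIntegrable; rw [huIcc]; exact slice_cont hft_cont hxmem
  have i3 : IntervalIntegrable (fun v => g x v * (vavg f0 x - f0 x v)) volume (-1:ℝ) 1 := by
    apply ContinuousOn.intervalIntegrable; rw [huIcc]
    exact (slice_cont hg_cont hxmem).mul (continuousOn_const.sub (slice_cont hf0_cont hxmem))
  have hpt : ∀ v ∈ uIcc (-1:ℝ) 1,
      v * (ftx x v * g x v + ft x v * gx x v)
        = (σs0 x / Kn) * (vavg ft x * g x v - vavg g x * ft x v)
          + (σst x / Kn) * (g x v * (vavg f0 x - f0 x v)) := by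
    intro v hv
    rw [huIcc] at hv
    have e1 := hfteq x hxmem v hv
    have e2 := hgeq x hxmem v hv
    have hsplit : v * (ftx x v * g x v + ft x v * gx x v)
        = (v * ftx x v) * g x v + ft x v * (v * gx x v) := by ring
    have e2' : v * gx x v = -((σs0 x / Kn) * (vavg g x - g x v) - Kn * σa x * g x v) := by
      linarith
    rw [hsplit, e1, e2']
    ring
  have hval : (∫ v in (-1:ℝ)..1, v * (ftx x v * g x v + ft x v * gx x v))
      = (σst x / Kn) * ∫ v in (-1:ℝ)..1, g x v * (vavg f0 x - f0 x v) := by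
    rw [intervalIntegral.integral_congr hpt,
      intervalIntegral.integral_add
        (((i1.const_mul (vavg ft x)).sub (i2.const_mul (vavg g x))).const_mul (σs0 x / Kn))
        (i3.const_mul (σst x / Kn)),
      intervalIntegral.integral_const_mul, intervalIntegral.integral_const_mul,
      intervalIntegral.integral_sub (i1.const_mul (vavg ft x)) (i2.const_mul (vavg g x)),
      intervalIntegral.integral_const_mul, intervalIntegral.integral_const_mul]
    have hg2 : (∫ v in (-1:ℝ)..1, g x v) = 2 * vavg g x := by simp only [vavg]; ring
    have hft2 : (∫ v in (-1:ℝ)..1, ft x v) = 2 * vavg ft x := by simp only [vavg]; ring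
    rw [hg2, hft2]; ring
  rwa [hval] at key
end

section
/- Let Kn ∈ (0,1], δ > 0, 0 < ε < 1/2, let P be a nonempty index set, and for each p ∈ P let γ_p ∈ L¹((0,1)). Suppose there are constants C₁, C₂ > 0, a finite-dimensional subspace V of L²((0,1)), and for each p a decomposition γ_p = Kn·h_p + r_p on (ε, 1−ε) with ∫_ε^{1−ε} |r_p| dx ≤ C₁·Kn³ and inf_{v∈V} ∫_ε^{1−ε} |h_p − v| dx ≤ C₂·Kn. Then there exists a continuous c : [0,1] → ℝ with ‖c‖_∞ = 1, vanishing outside [ε, 1−ε] and L²-orthogonal to V, such that sup_{p∈P} |∫₀¹ γ_p·c dx| ≤ (C₁ + C₂)·Kn². Consequently, for any σ̃ ∈ C([0,1]) with exact measurements b_p = ∫₀¹ γ_p·σ̃ dx, the function σ := σ̃ + (δ/((C₁+C₂)·Kn²))·c satisfies sup_p |∫₀¹ γ_p·σ dx − b_p| ≤ δ while ‖σ − σ̃‖_∞ = δ/((C₁+C₂)·Kn²). -/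
open MeasureTheory Set

/-- Lebesgue measure restricted to `(0,1)`. -/
noncomputable def μ01 : Measure ℝ := volume.restrict (Ioo (0 : ℝ) 1)

instance : IsFiniteMeasure μ01 := by
  constructor
  rw [μ01, Measure.restrict_apply_univ, Real.volume_Ioo]
  exact ENNReal.ofReal_lt_top

lemma lp_integrable (v : Lp ℝ 2 μ01) : Integrable (v : ℝ → ℝ) μ01 :=
  (Lp.memLp v).integrable (by norm_num)

/-- triangular bump centered at `m` with half-width `w/2`. -/
noncomputable def hatf (w m x : ℝ) : ℝ := max 0 (1 - |x - m| * (2 / w))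

lemma hatf_cont (w m : ℝ) : Continuous (hatf w m) := by
  apply continuous_const.max
  exact continuous_const.sub (((continuous_id.sub continuous_const).abs).mul continuous_const)

lemma hatf_nonneg (w m x : ℝ) : 0 ≤ hatf w m x := le_max_left _ _

lemma hatf_le_one (w m x : ℝ) (hw : 0 < w) : hatf w m x ≤ 1 := by
  apply max_le (by norm_num)
  have : 0 ≤ |x - m| * (2 / w) := by positivity
  linarith

lemma hatf_center (w m : ℝ) : hatf w m m = 1 := by
  simp [hatf]

lemma hatf_zero (w m x : ℝ) (hw : 0 < w) (hx : w / 2 ≤ |x - m|) : hatf w m x = 0 := by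
  have h2w : (0:ℝ) < 2 / w := by positivity
  have hww : w / 2 * (2 / w) = 1 := by field_simp
  have h1 : 1 - |x - m| * (2 / w) ≤ 0 := by nlinarith [mul_le_mul_of_nonneg_right hx h2w.le]
  simpa [hatf] using max_eq_left h1

lemma hatf_supp (w m x : ℝ) (hw : 0 < w) (hne : hatf w m x ≠ 0) : |x - m| < w / 2 := by
  by_contra hcon
  exact hne (hatf_zero w m x hw (le_of_not_gt hcon))


/-- **Abstract form of Theorem 3.2 (ill-conditioning of the absorption reconstruction in
the diffusion limit).**  If each kernel `γ_p` decomposes on `(ε,1−ε)` as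
`γ_p = Kn·h_p + r_p` with `∫|r_p| ≤ C₁·Kn³` and `h_p` within `C₂·Kn` (in `L¹`) of a
finite-dimensional subspace `V` of `L²((0,1))`, then there exists a continuous bump `c`
with sup-norm `1`, supported in `[ε,1−ε]`, orthogonal to `V`, whose measurements are all
at most `(C₁+C₂)·Kn²`; hence perturbing any exact coefficient `σ̃` by
`(δ/((C₁+C₂)Kn²))·c` changes the measurements by at most `δ` while moving the
coefficient by `δ/((C₁+C₂)Kn²)` in sup-norm. -/
theorem absorption_distinguishability_lower_bound
    (Kn δ ε : ℝ) (hKn : Kn ∈ Ioc (0 : ℝ) 1) (hδ : 0 < δ)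
    (hε : 0 < ε) (hε' : ε < 1 / 2)
    (P : Type*) [Nonempty P] (γ : P → ℝ → ℝ)
    (hγ : ∀ p, IntegrableOn (γ p) (Ioo 0 1))
    (C₁ C₂ : ℝ) (hC₁ : 0 < C₁) (hC₂ : 0 < C₂)
    (V : Submodule ℝ (Lp ℝ 2 μ01)) (hV : FiniteDimensional ℝ V)
    (h r : P → ℝ → ℝ)
    (hdec : ∀ p, ∀ x ∈ Ioo ε (1 - ε), γ p x = Kn * h p x + r p x)
    (hhint : ∀ p, IntegrableOn (h p) (Ioo ε (1 - ε)))
    (hrint : ∀ p, IntegrableOn (r p) (Ioo ε (1 - ε)))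
    (hr : ∀ p, (∫ x in Ioo ε (1 - ε), |r p x|) ≤ C₁ * Kn ^ 3)
    (hinf : ∀ p,
      sInf {t : ℝ | ∃ v ∈ V,
          t = ∫ x in Ioo ε (1 - ε), |h p x - ((v : Lp ℝ 2 μ01) : ℝ → ℝ) x|}
        ≤ C₂ * Kn) :
    ∃ c : ℝ → ℝ, Continuous c ∧
      (∀ x, x ∉ Icc ε (1 - ε) → c x = 0) ∧
      (∀ x, |c x| ≤ 1) ∧ (∃ x, |c x| = 1) ∧
      (∀ v ∈ V, (∫ x in Ioo (0 : ℝ) 1, c x * ((v : Lp ℝ 2 μ01) : ℝ → ℝ) x) = 0) ∧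
      (∀ p, |∫ x in Ioo (0 : ℝ) 1, γ p x * c x| ≤ (C₁ + C₂) * Kn ^ 2) ∧
      ∀ σt : ℝ → ℝ, Continuous σt →
        (∀ p, |(∫ x in Ioo (0 : ℝ) 1, γ p x * (σt x + δ / ((C₁ + C₂) * Kn ^ 2) * c x))
              - ∫ x in Ioo (0 : ℝ) 1, γ p x * σt x| ≤ δ) ∧
        (∀ x, |(σt x + δ / ((C₁ + C₂) * Kn ^ 2) * c x) - σt x|
            ≤ δ / ((C₁ + C₂) * Kn ^ 2)) ∧
        (∃ x, |(σt x + δ / ((C₁ + C₂) * Kn ^ 2) * c x) - σt x|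
            = δ / ((C₁ + C₂) * Kn ^ 2)) := by
  classical
  obtain ⟨hKn0, hKn1⟩ := hKn
  have hsub : Ioo ε (1 - ε) ⊆ Ioo (0:ℝ) 1 := fun x hx =>
    ⟨lt_of_le_of_lt hε.le hx.1, lt_of_lt_of_le hx.2 (by linarith)⟩
  set n := Module.finrank ℝ V with hn
  have hNpos : (0:ℝ) < (n+1 : ℕ) := by positivity
  set w : ℝ := (1 - 2*ε) / (n+1 : ℕ) with hwdef
  have hw : 0 < w := div_pos (by linarith) hNpos
  set m : Fin (n+1) → ℝ := fun k => ε + k * w + w/2 with hm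
  have hNw : ((n+1 : ℕ) : ℝ) * w = 1 - 2*ε := by
    rw [hwdef]; field_simp
  -- membership of the support
  have hat_mem : ∀ (k : Fin (n+1)) x, hatf w (m k) x ≠ 0 → x ∈ Ioo ε (1-ε) := by
    intro k x hne
    have hd := abs_lt.mp (hatf_supp w (m k) x hw hne)
    have hk1 : (k:ℝ) + 1 ≤ (n+1 : ℕ) := by exact_mod_cast Nat.succ_le_of_lt k.isLt
    have hk0 : (0:ℝ) ≤ (k:ℝ) := by positivity
    have hmk : m k = ε + k * w + w/2 := rfl
    constructor
    · nlinarith [hd.1]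
    · nlinarith [hd.2]
  -- disjointness
  have hat_disj : ∀ (j k : Fin (n+1)) x, j ≠ k → hatf w (m j) x ≠ 0 → hatf w (m k) x = 0 := by
    intro j k x hjk hj
    have hdj := hatf_supp w (m j) x hw hj
    apply hatf_zero w (m k) x hw
    have hone : (1:ℝ) ≤ |(j:ℝ) - (k:ℝ)| := by
      have hne : (j:ℕ) ≠ (k:ℕ) := fun hc => hjk (Fin.val_injective hc)
      rcases lt_or_gt_of_ne hne with hlt | hlt
      · rw [abs_sub_comm, le_abs]; left
        have h1 : ((j:ℕ):ℝ) + 1 ≤ ((k:ℕ):ℝ) := by exact_mod_cast Nat.succ_le_of_lt hlt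
        push_cast at h1 ⊢; linarith
      · rw [le_abs]; left
        have h1 : ((k:ℕ):ℝ) + 1 ≤ ((j:ℕ):ℝ) := by exact_mod_cast Nat.succ_le_of_lt hlt
        push_cast at h1 ⊢; linarith
    have hmm : m j - m k = ((j:ℝ) - (k:ℝ)) * w := by
      show (ε + j*w + w/2) - (ε + k*w + w/2) = _
      ring
    have hdist : w ≤ |m j - m k| := by
      rw [hmm, abs_mul, abs_of_pos hw]
      nlinarith
    have htri : |m j - m k| ≤ |x - m j| + |x - m k| := by
      calc |m j - m k| = |(m j - x) + (x - m k)| := by ring_nf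
        _ ≤ |m j - x| + |x - m k| := abs_add_le _ _
        _ = |x - m j| + |x - m k| := by rw [abs_sub_comm]
    linarith
  have hat_single : ∀ x, ∃ k₀ : Fin (n+1), ∀ k, k ≠ k₀ → hatf w (m k) x = 0 := by
    intro x
    by_cases hx : ∃ k₀, hatf w (m k₀) x ≠ 0
    · obtain ⟨k₀, hk₀⟩ := hx
      exact ⟨k₀, fun k hk => hat_disj k₀ k x (Ne.symm hk) hk₀⟩
    · push_neg at hx
      exact ⟨0, fun k _ => hx k⟩
  -- integrability of hat k * v
  have hint_hat : ∀ (k : Fin (n+1)) (v : Lp ℝ 2 μ01),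
      Integrable (fun x => hatf w (m k) x * (v : ℝ → ℝ) x) μ01 := fun k v =>
    (lp_integrable v).bdd_mul (hatf_cont w (m k)).aestronglyMeasurable
      (c := 1) (Filter.Eventually.of_forall fun x => by
        rw [Real.norm_eq_abs, abs_of_nonneg (hatf_nonneg w (m k) x)]
        exact hatf_le_one w (m k) x hw)
  let L : Fin (n+1) → (V →ₗ[ℝ] ℝ) := fun k =>
    { toFun := fun v => ∫ x, hatf w (m k) x * ((v : Lp ℝ 2 μ01) : ℝ → ℝ) x ∂μ01
      map_add' := by
        intro v v'
        have heq : (fun x => hatf w (m k) x * (((v + v' : V) : Lp ℝ 2 μ01) : ℝ → ℝ) x)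
            =ᵐ[μ01] fun x => hatf w (m k) x * ((v : Lp ℝ 2 μ01) : ℝ → ℝ) x
              + hatf w (m k) x * ((v' : Lp ℝ 2 μ01) : ℝ → ℝ) x := by
          filter_upwards [Lp.coeFn_add (v : Lp ℝ 2 μ01) (v' : Lp ℝ 2 μ01)] with x hx
          rw [show (((v + v' : V) : Lp ℝ 2 μ01) : ℝ → ℝ) x
              = ((((v : Lp ℝ 2 μ01) + (v' : Lp ℝ 2 μ01)) : Lp ℝ 2 μ01) : ℝ → ℝ) x from rfl, hx]
          simp [mul_add]
        rw [integral_congr_ae heq]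
        exact integral_add (hint_hat k v) (hint_hat k v')
      map_smul' := by
        intro a v
        have heq : (fun x => hatf w (m k) x * (((a • v : V) : Lp ℝ 2 μ01) : ℝ → ℝ) x)
            =ᵐ[μ01] fun x => a * (hatf w (m k) x * ((v : Lp ℝ 2 μ01) : ℝ → ℝ) x) := by
          filter_upwards [Lp.coeFn_smul a (v : Lp ℝ 2 μ01)] with x hx
          rw [show (((a • v : V) : Lp ℝ 2 μ01) : ℝ → ℝ) x
              = ((a • (v : Lp ℝ 2 μ01) : Lp ℝ 2 μ01) : ℝ → ℝ) x from rfl, hx]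
          simp only [Pi.smul_apply, smul_eq_mul]; ring
        rw [integral_congr_ae heq, integral_const_mul, RingHom.id_apply, smul_eq_mul] }
  have hLdep : ¬ LinearIndependent ℝ L := by
    intro hL
    have h1 := hL.fintype_card_le_finrank
    simp only [Fintype.card_fin] at h1
    rw [show Module.finrank ℝ (↥V →ₗ[ℝ] ℝ) = Module.finrank ℝ ↥V from
      Subspace.dual_finrank_eq] at h1
    rw [← hn] at h1
    omega
  obtain ⟨a, hsum, k₁, hk₁⟩ := Fintype.not_linearIndependent_iff.mp hLdep
  have horth0 : ∀ v : V,
      ∑ k, a k * ∫ x, hatf w (m k) x * ((v : Lp ℝ 2 μ01) : ℝ → ℝ) x ∂μ01 = 0 := by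
    intro v
    have h0 : (∑ k, a k • L k) v = (0 : V →ₗ[ℝ] ℝ) v := by rw [hsum]
    simpa [L, LinearMap.sum_apply, LinearMap.smul_apply, smul_eq_mul] using h0
  -- the maximizing index
  obtain ⟨kmax, -, hkmax⟩ := Finset.exists_max_image Finset.univ (fun k => |a k|)
    ⟨k₁, Finset.mem_univ k₁⟩
  set M := |a kmax| with hM
  have hM0 : 0 < M := lt_of_lt_of_le (abs_pos.mpr hk₁) (hkmax k₁ (Finset.mem_univ k₁))
  set c₀ : ℝ → ℝ := fun x => ∑ k, a k * hatf w (m k) x with hc₀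
  set c : ℝ → ℝ := fun x => c₀ x / M with hcdef
  have hccont : Continuous c := by
    apply Continuous.div_const
    exact continuous_finset_sum _ fun k _ => continuous_const.mul (hatf_cont w (m k))
  have hcsupp : ∀ x, x ∉ Ioo ε (1-ε) → c x = 0 := by
    intro x hx
    have hz : ∀ k : Fin (n+1), hatf w (m k) x = 0 := by
      intro k
      by_contra hne
      exact hx (hat_mem k x hne)
    simp only [hcdef, hc₀]
    rw [Finset.sum_eq_zero fun k _ => by rw [hz k, mul_zero]]
    simp
  have hcbound : ∀ x, |c x| ≤ 1 := by
    intro x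
    obtain ⟨k₀, hk₀⟩ := hat_single x
    have hx0 : c₀ x = a k₀ * hatf w (m k₀) x :=
      Finset.sum_eq_single k₀ (fun k _ hk => by rw [hk₀ k hk, mul_zero])
        (fun hcon => absurd (Finset.mem_univ k₀) hcon)
    have : |c₀ x| ≤ M := by
      rw [hx0, abs_mul]
      calc |a k₀| * |hatf w (m k₀) x| ≤ M * 1 := by
            apply mul_le_mul (hkmax k₀ (Finset.mem_univ k₀)) ?_ (abs_nonneg _) hM0.le
            rw [abs_of_nonneg (hatf_nonneg _ _ _)]
            exact hatf_le_one _ _ _ hw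
        _ = M := mul_one M
    rw [hcdef]
    rw [abs_div, abs_of_pos hM0, div_le_one hM0]
    exact this
  have hattain : |c (m kmax)| = 1 := by
    have hx0 : c₀ (m kmax) = a kmax * hatf w (m kmax) (m kmax) :=
      Finset.sum_eq_single kmax
        (fun k _ hk => by
          rw [hat_disj kmax k (m kmax) (Ne.symm hk) (by rw [hatf_center]; norm_num), mul_zero])
        (fun hcon => absurd (Finset.mem_univ kmax) hcon)
    rw [hcdef]
    dsimp only
    rw [hx0, hatf_center, mul_one, abs_div, abs_of_pos hM0, ← hM, div_self hM0.ne']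
  -- orthogonality
  have horth : ∀ v ∈ V, (∫ x, c x * ((v : Lp ℝ 2 μ01) : ℝ → ℝ) x ∂μ01) = 0 := by
    intro v hv
    have h0 := horth0 ⟨v, hv⟩
    have hcsum : ∫ x, c₀ x * (v : ℝ → ℝ) x ∂μ01
        = ∑ k, a k * ∫ x, hatf w (m k) x * (v : ℝ → ℝ) x ∂μ01 := by
      have : ∀ k : Fin (n+1), a k * ∫ x, hatf w (m k) x * (v : ℝ → ℝ) x ∂μ01
          = ∫ x, a k * (hatf w (m k) x * (v : ℝ → ℝ) x) ∂μ01 :=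
        fun k => (integral_const_mul (a k) _).symm
      rw [Finset.sum_congr rfl fun k _ => this k, ← integral_finset_sum]
      · congr 1
        funext x
        simp only [hc₀, Finset.sum_mul]
        exact Finset.sum_congr rfl fun k _ => by ring
      · exact fun k _ => (hint_hat k v).const_mul (a k)
    have : ∫ x, c x * (v : ℝ → ℝ) x ∂μ01 = M⁻¹ * ∫ x, c₀ x * (v : ℝ → ℝ) x ∂μ01 := by
      rw [← integral_const_mul]
      congr 1
      funext x
      simp only [hcdef]
      ring
    rw [this, hcsum, h0, mul_zero]
  -- restriction of integrals to (ε, 1-ε)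
  have hrestrict : ∀ F : ℝ → ℝ, (∀ x, x ∉ Ioo ε (1-ε) → F x = 0) →
      (∫ x, F x ∂μ01) = ∫ x in Ioo ε (1-ε), F x := by
    intro F hF
    show (∫ x in Ioo (0:ℝ) 1, F x) = _
    exact setIntegral_eq_of_subset_of_ae_diff_eq_zero measurableSet_Ioo.nullMeasurableSet hsub
      (Filter.Eventually.of_forall fun x hx => hF x hx.2)
  have hmul_int : ∀ F : ℝ → ℝ, IntegrableOn F (Ioo ε (1-ε)) →
      IntegrableOn (fun x => F x * c x) (Ioo ε (1-ε)) := by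
    intro F hF
    have h2 := hF.bdd_mul hccont.aestronglyMeasurable
      (c := 1) (Filter.Eventually.of_forall fun x => by rw [Real.norm_eq_abs]; exact hcbound x)
    have heq : (fun x => c x * F x) = fun x => F x * c x := funext fun x => mul_comm _ _
    rwa [heq] at h2
  -- the measurement bound
  have hmeas : ∀ p, |∫ x, γ p x * c x ∂μ01| ≤ (C₁+C₂)*Kn^2 := by
    intro p
    have h1 : (∫ x, γ p x * c x ∂μ01) = ∫ x in Ioo ε (1-ε), γ p x * c x :=
      hrestrict _ (fun x hx => by rw [hcsupp x hx, mul_zero])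
    rw [h1]
    apply le_of_forall_sub_le
    intro η hη
    have hSne : ({t : ℝ | ∃ v ∈ V,
        t = ∫ x in Ioo ε (1 - ε), |h p x - ((v : Lp ℝ 2 μ01) : ℝ → ℝ) x|}).Nonempty :=
      ⟨_, ⟨(0 : Lp ℝ 2 μ01), V.zero_mem, rfl⟩⟩
    obtain ⟨t, ht, htlt⟩ := exists_lt_of_csInf_lt hSne
      (lt_of_le_of_lt (hinf p) (lt_add_of_pos_right _ hη))
    obtain ⟨v, hvV, htv⟩ := ht
    have hvE : IntegrableOn ((v : Lp ℝ 2 μ01) : ℝ → ℝ) (Ioo ε (1-ε)) volume :=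
      IntegrableOn.mono_set (lp_integrable v) hsub
    have hhvE : IntegrableOn (fun x => h p x - ((v : Lp ℝ 2 μ01) : ℝ → ℝ) x)
        (Ioo ε (1-ε)) := (hhint p).sub hvE
    have hAint := hmul_int _ hhvE
    have hBint := hmul_int _ (hrint p)
    have hhcint := hmul_int _ (hhint p)
    have hvcint := hmul_int _ hvE
    have e1 : ∫ x in Ioo ε (1-ε), γ p x * c x
        = Kn * (∫ x in Ioo ε (1-ε), h p x * c x) + ∫ x in Ioo ε (1-ε), r p x * c x := by
      rw [setIntegral_congr_fun measurableSet_Ioo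
        (fun x hx => by simp only; rw [hdec p x hx]; ring :
          EqOn (fun x => γ p x * c x)
            (fun x => Kn * (h p x * c x) + r p x * c x) (Ioo ε (1-ε)))]
      rw [integral_add (hhcint.const_mul Kn) hBint, integral_const_mul]
    have e2 : ∫ x in Ioo ε (1-ε), h p x * c x
        = (∫ x in Ioo ε (1-ε), (h p x - ((v : Lp ℝ 2 μ01) : ℝ → ℝ) x) * c x)
          + ∫ x in Ioo ε (1-ε), ((v : Lp ℝ 2 μ01) : ℝ → ℝ) x * c x := by
      rw [← integral_add hAint hvcint]
      apply setIntegral_congr_fun measurableSet_Ioo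
      intro x _
      simp only
      ring
    have e3 : ∫ x in Ioo ε (1-ε), ((v : Lp ℝ 2 μ01) : ℝ → ℝ) x * c x = 0 := by
      have hr2 := hrestrict (fun x => c x * ((v : Lp ℝ 2 μ01) : ℝ → ℝ) x)
        (fun x hx => by show c x * ((v : Lp ℝ 2 μ01) : ℝ → ℝ) x = 0
                        rw [hcsupp x hx, zero_mul])
      have hsw : ∫ x in Ioo ε (1-ε), ((v : Lp ℝ 2 μ01) : ℝ → ℝ) x * c x
          = ∫ x in Ioo ε (1-ε), c x * ((v : Lp ℝ 2 μ01) : ℝ → ℝ) x :=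
        setIntegral_congr_fun measurableSet_Ioo (fun x _ => mul_comm _ _)
      rw [hsw, ← hr2]
      exact horth v hvV
    have b1 : |∫ x in Ioo ε (1-ε), (h p x - ((v : Lp ℝ 2 μ01) : ℝ → ℝ) x) * c x| ≤ t := by
      rw [htv]
      calc |∫ x in Ioo ε (1-ε), (h p x - ((v : Lp ℝ 2 μ01) : ℝ → ℝ) x) * c x|
          ≤ ∫ x in Ioo ε (1-ε), |(h p x - ((v : Lp ℝ 2 μ01) : ℝ → ℝ) x) * c x| := by
            simpa only [Real.norm_eq_abs] using norm_integral_le_integral_norm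
              (μ := volume.restrict (Ioo ε (1-ε)))
              (fun x => (h p x - ((v : Lp ℝ 2 μ01) : ℝ → ℝ) x) * c x)
        _ ≤ ∫ x in Ioo ε (1-ε), |h p x - ((v : Lp ℝ 2 μ01) : ℝ → ℝ) x| := by
            apply integral_mono hAint.abs hhvE.abs
            intro x
            simp only
            rw [abs_mul]
            calc |h p x - ((v : Lp ℝ 2 μ01) : ℝ → ℝ) x| * |c x|
                ≤ |h p x - ((v : Lp ℝ 2 μ01) : ℝ → ℝ) x| * 1 :=
                  mul_le_mul_of_nonneg_left (hcbound x) (abs_nonneg _)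
              _ = _ := mul_one _
    have b2 : |∫ x in Ioo ε (1-ε), r p x * c x| ≤ C₁ * Kn^3 := by
      calc |∫ x in Ioo ε (1-ε), r p x * c x|
          ≤ ∫ x in Ioo ε (1-ε), |r p x * c x| := by
            simpa only [Real.norm_eq_abs] using norm_integral_le_integral_norm
              (μ := volume.restrict (Ioo ε (1-ε))) (fun x => r p x * c x)
        _ ≤ ∫ x in Ioo ε (1-ε), |r p x| := by
            apply integral_mono hBint.abs (hrint p).abs
            intro x
            simp only
            rw [abs_mul]
            calc |r p x| * |c x| ≤ |r p x| * 1 :=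
                  mul_le_mul_of_nonneg_left (hcbound x) (abs_nonneg _)
              _ = _ := mul_one _
        _ ≤ C₁ * Kn^3 := hr p
    have ht0 : 0 ≤ t := le_trans (abs_nonneg _) b1
    rw [e1, e2, e3, add_zero]
    have habs : |Kn * ((∫ x in Ioo ε (1-ε), (h p x - ((v : Lp ℝ 2 μ01) : ℝ → ℝ) x) * c x))
        + ∫ x in Ioo ε (1-ε), r p x * c x| ≤ Kn * t + C₁ * Kn^3 := by
      calc |Kn * _ + _| ≤ |Kn * (∫ x in Ioo ε (1-ε),
              (h p x - ((v : Lp ℝ 2 μ01) : ℝ → ℝ) x) * c x)|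
            + |∫ x in Ioo ε (1-ε), r p x * c x| := abs_add_le _ _
        _ ≤ Kn * t + C₁ * Kn^3 := by
            rw [abs_mul, abs_of_pos hKn0]
            exact add_le_add (mul_le_mul_of_nonneg_left b1 hKn0.le) b2
    have f1 : Kn * t ≤ C₂ * Kn^2 + Kn * η := by
      have h2 := mul_le_mul_of_nonneg_left htlt.le hKn0.le
      have h3 : Kn * (C₂ * Kn + η) = C₂ * Kn^2 + Kn * η := by ring
      linarith
    have f2 : Kn * η ≤ η := by
      have h2 := mul_nonneg (sub_nonneg.mpr hKn1) hη.le
      have h3 : (1 - Kn) * η = η - Kn * η := by ring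
      linarith
    have f3 : C₁ * Kn^3 ≤ C₁ * Kn^2 := by
      have h2 := mul_nonneg (mul_nonneg hC₁.le (sq_nonneg Kn)) (sub_nonneg.mpr hKn1)
      have h3 : C₁ * Kn^2 * (1 - Kn) = C₁ * Kn^2 - C₁ * Kn^3 := by ring
      linarith
    linarith [habs, f1, f2, f3]
  -- assemble
  have hB : (0:ℝ) < (C₁+C₂)*Kn^2 := by positivity
  refine ⟨c, hccont, fun x hx => hcsupp x (fun hmem => hx (Ioo_subset_Icc_self hmem)),
    hcbound, ⟨m kmax, hattain⟩, horth, hmeas, ?_⟩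
  intro σt hσt
  have hT0 : 0 < δ / ((C₁+C₂)*Kn^2) := div_pos hδ hB
  obtain ⟨Cb, hCb⟩ := isCompact_Icc.exists_bound_of_continuousOn
    (f := σt) (s := Icc (0:ℝ) 1) hσt.continuousOn
  have hσbd : ∀ᵐ x ∂μ01, ‖σt x‖ ≤ Cb := by
    have h2 : ∀ᵐ x ∂(volume.restrict (Ioo (0:ℝ) 1)), ‖σt x‖ ≤ Cb :=
      (ae_restrict_iff' measurableSet_Ioo).mpr (Filter.Eventually.of_forall
        fun x hx => hCb x ⟨hx.1.le, hx.2.le⟩)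
    exact h2
  have hγσ : ∀ p, Integrable (fun x => γ p x * σt x) (volume.restrict (Ioo (0:ℝ) 1)) := by
    intro p
    have h2 := (hγ p).bdd_mul (hσt.aestronglyMeasurable) hσbd
    have heq : (fun x => σt x * γ p x) = fun x => γ p x * σt x := funext fun x => mul_comm _ _
    rwa [heq] at h2
  have hγc : ∀ p, Integrable (fun x => γ p x * c x) (volume.restrict (Ioo (0:ℝ) 1)) := by
    intro p
    have h2 := (hγ p).bdd_mul hccont.aestronglyMeasurable
      (c := 1) (Filter.Eventually.of_forall fun x => by rw [Real.norm_eq_abs]; exact hcbound x)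
    have heq : (fun x => c x * γ p x) = fun x => γ p x * c x := funext fun x => mul_comm _ _
    rwa [heq] at h2
  refine ⟨?_, ?_, ⟨m kmax, ?_⟩⟩
  · intro p
    have e : (fun x => γ p x * (σt x + δ / ((C₁ + C₂) * Kn ^ 2) * c x))
        = fun x => γ p x * σt x + (δ / ((C₁ + C₂) * Kn ^ 2)) * (γ p x * c x) :=
      funext fun x => by ring
    rw [show (∫ x in Ioo (0:ℝ) 1, γ p x * (σt x + δ / ((C₁ + C₂) * Kn ^ 2) * c x))
        = ∫ x in Ioo (0:ℝ) 1,
            (γ p x * σt x + (δ / ((C₁ + C₂) * Kn ^ 2)) * (γ p x * c x)) from by rw [e]]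
    rw [integral_add (hγσ p) ((hγc p).const_mul _), integral_const_mul, add_sub_cancel_left,
      abs_mul, abs_of_pos hT0]
    calc δ / ((C₁ + C₂) * Kn ^ 2) * |∫ x in Ioo (0:ℝ) 1, γ p x * c x|
        ≤ δ / ((C₁ + C₂) * Kn ^ 2) * ((C₁ + C₂) * Kn ^ 2) :=
          mul_le_mul_of_nonneg_left (hmeas p) hT0.le
      _ = δ := div_mul_cancel₀ δ hB.ne'
  · intro x
    rw [add_sub_cancel_left, abs_mul, abs_of_pos hT0]
    calc δ / ((C₁ + C₂) * Kn ^ 2) * |c x| ≤ δ / ((C₁ + C₂) * Kn ^ 2) * 1 :=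
        mul_le_mul_of_nonneg_left (hcbound x) hT0.le
      _ = _ := mul_one _
  · rw [add_sub_cancel_left, abs_mul, abs_of_pos hT0, hattain, mul_one]
end
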